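/- Let G be a graph with ℓ isolated vertices and t ≥ 1. If t·ℓ > dist(G), then dist(μ_t(G)) = t·ℓ. -/

import Mathlib

open SimpleGraph

/-- The generalized Mycielskian `μ_t(G)`: levels `0,…,t` of copies of `V(G)`
plus a root `none`. Level-0 vertices are the original vertices. -/
def genMyc {V : Type*} (G : SimpleGraph V) (t : ℕ) :
    SimpleGraph (Option (Fin (t + 1) × V)) :=
  SimpleGraph.fromRel fun a b =>
    match a, b with
    | some (s, i), some (s', j) =>
        ((s : ℕ) = 0 ∧ (s' : ℕ) = 0 ∧ G.Adj i j) ∨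
        ((s' : ℕ) = (s : ℕ) + 1 ∧ G.Adj i j)
    | some (s, _), none => (s : ℕ) = t
    | _, _ => False

/-- The (traditional) Mycielskian `μ(G)`. -/
def myc {V : Type*} (G : SimpleGraph V) : SimpleGraph (Option (Fin 2 × V)) :=
  genMyc G 1

/-- The star `K_{1,m}` with center `0` and `m` leaves. -/
def starG (m : ℕ) : SimpleGraph (Fin (m + 1)) :=
  SimpleGraph.fromRel fun a _ => a = 0

/-- A `d`-coloring is distinguishing if only the trivial automorphism preserves it. -/
def IsDistinguishing {V : Type*} (H : SimpleGraph V) (d : ℕ) (c : V → Fin d) : Prop :=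
  ∀ φ : H ≃g H, (∀ v, c (φ v) = c v) → ∀ v, φ v = v

/-- The distinguishing number of a graph. -/
noncomputable def distNum {V : Type*} (H : SimpleGraph V) : ℕ :=
  sInf {d | ∃ c : V → Fin d, IsDistinguishing H d c}


section AuxMyc
variable {V : Type*} (G : SimpleGraph V) (t : ℕ)

lemma genMyc_adj_some_some (a b : ℕ) (ha : a < t+1) (hb : b < t+1) (i j : V) :
    (genMyc G t).Adj (some (⟨a,ha⟩, i)) (some (⟨b,hb⟩, j)) ↔
      ((a = 0 ∧ b = 0) ∨ b = a + 1 ∨ a = b + 1) ∧ G.Adj i j := by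
  simp only [genMyc, fromRel_adj]
  constructor
  · rintro ⟨hne, h | h⟩
    · rcases h with ⟨h1,h2,h3⟩ | ⟨h1,h2⟩
      · exact ⟨Or.inl ⟨h1,h2⟩, h3⟩
      · exact ⟨Or.inr (Or.inl h1), h2⟩
    · rcases h with ⟨h1,h2,h3⟩ | ⟨h1,h2⟩
      · exact ⟨Or.inl ⟨h2,h1⟩, h3.symm⟩
      · exact ⟨Or.inr (Or.inr h1), h2.symm⟩
  · rintro ⟨h1, h2⟩
    refine ⟨?_, ?_⟩
    · intro hcon
      rw [Option.some.injEq, Prod.mk.injEq] at hcon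
      exact h2.ne hcon.2
    · rcases h1 with ⟨h1,h1'⟩ | h1 | h1
      · exact Or.inl (Or.inl ⟨h1, h1', h2⟩)
      · exact Or.inl (Or.inr ⟨h1, h2⟩)
      · exact Or.inr (Or.inr ⟨h1, h2.symm⟩)

lemma genMyc_adj_some_none (a : ℕ) (ha : a < t+1) (i : V) :
    (genMyc G t).Adj (some (⟨a,ha⟩, i)) none ↔ a = t := by
  simp only [genMyc, fromRel_adj]
  constructor
  · rintro ⟨hne, h | h⟩
    · exact h
    · exact h.elim
  · rintro rfl
    exact ⟨by simp, Or.inl rfl⟩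

lemma genMyc_adj_none_some (a : ℕ) (ha : a < t+1) (i : V) :
    (genMyc G t).Adj none (some (⟨a,ha⟩, i)) ↔ a = t := by
  rw [adj_comm]; exact genMyc_adj_some_none G t a ha i

lemma genMyc_isolated_some (a : ℕ) (ha : a < t+1) (i : V) :
    (∀ y, ¬ (genMyc G t).Adj (some (⟨a,ha⟩, i)) y) ↔ (a < t ∧ ∀ u, ¬ G.Adj i u) := by
  constructor
  · intro h
    have hat : a < t := by
      rcases Nat.lt_or_ge a t with h' | h'
      · exact h'
      · exact absurd ((genMyc_adj_some_none G t a ha i).2 (by omega)) (h none)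
    refine ⟨hat, fun u hu => ?_⟩
    exact h (some (⟨a+1, by omega⟩, u))
      ((genMyc_adj_some_some G t a (a+1) ha (by omega) i u).2 ⟨Or.inr (Or.inl rfl), hu⟩)
  · rintro ⟨hat, hiso⟩ y hy
    match y with
    | none => exact absurd ((genMyc_adj_some_none G t a ha i).1 hy) (by omega)
    | some (⟨b, hb⟩, j) =>
      exact hiso j ((genMyc_adj_some_some G t a b ha hb i j).1 hy).2

lemma genMyc_not_isolated_none (v : V) :
    (genMyc G t).Adj none (some (⟨t, by omega⟩, v)) :=
  (genMyc_adj_none_some G t t (by omega) v).2 rfl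

/-- swapping two isolated vertices is an automorphism -/
lemma swap_iso_of_isolated (H : SimpleGraph W) [DecidableEq W] (a b : W)
    (ha : ∀ y, ¬H.Adj a y) (hb : ∀ y, ¬H.Adj b y) :
    ∃ φ : H ≃g H, ∀ x, φ x = Equiv.swap a b x := by
  have key : ∀ x y, H.Adj x y → H.Adj (Equiv.swap a b x) (Equiv.swap a b y) := by
    intro x y hxy
    have hxa : x ≠ a := fun h => ha y (h ▸ hxy)
    have hxb : x ≠ b := fun h => hb y (h ▸ hxy)
    have hya : y ≠ a := fun h => ha x (h ▸ hxy.symm)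
    have hyb : y ≠ b := fun h => hb x (h ▸ hxy.symm)
    rwa [Equiv.swap_apply_of_ne_of_ne hxa hxb, Equiv.swap_apply_of_ne_of_ne hya hyb]
  refine ⟨⟨Equiv.swap a b, ?_⟩, fun _ => rfl⟩
  intro x y
  constructor
  · intro hxy
    have := key _ _ hxy
    simpa using this
  · exact key x y

/-- Isomorphisms preserve isolation -/
lemma iso_isolated {H : SimpleGraph W} (φ : H ≃g H) (x : W) (hx : ∀ y, ¬H.Adj x y) :
    ∀ y, ¬H.Adj (φ x) y := by
  intro y hy
  have h2 : H.Adj (φ x) (φ (φ.symm y)) := by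
    rwa [RelIso.apply_symm_apply]
  exact hx _ (φ.map_adj_iff.1 h2)

lemma iso_dist_le {H : SimpleGraph W} (φ : H ≃g H) (x y : W) :
    H.dist (φ x) (φ y) ≤ H.dist x y := by
  rcases Nat.eq_zero_or_pos (H.dist x y) with h0 | hpos
  · rcases eq_or_ne x y with rfl | hne
    · simp [SimpleGraph.dist_self]
    · have h0' := (dist_eq_zero_iff_eq_or_not_reachable.1 h0).resolve_left hne
      have hnr : ¬ H.Reachable (φ x) (φ y) := by
        intro ⟨p⟩
        exact h0' ⟨(p.map (SimpleGraph.Iso.toHom φ.symm)).copy (by simp) (by simp)⟩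
      rw [h0, Nat.le_zero, dist_eq_zero_iff_eq_or_not_reachable]
      exact Or.inr hnr
  · have hr : H.Reachable x y := Reachable.of_dist_ne_zero (by omega)
    obtain ⟨p, hp⟩ := hr.exists_walk_length_eq_dist
    calc H.dist (φ x) (φ y) ≤ (p.map φ.toHom).length := dist_le _
    _ = H.dist x y := by rw [Walk.length_map, hp]

lemma iso_dist_eq {H : SimpleGraph W} (φ : H ≃g H) (x y : W) :
    H.dist (φ x) (φ y) = H.dist x y := by
  refine le_antisymm (iso_dist_le φ x y) ?_
  have := iso_dist_le φ.symm (φ x) (φ y)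
  simpa using this

def lvl : Option (Fin (t+1) × V) → ℕ
  | none => t+1
  | some (s, _) => (s : ℕ)

lemma genMyc_adj_lvl {x y : Option (Fin (t+1) × V)} (hxy : (genMyc G t).Adj x y) :
    lvl t x ≤ lvl t y + 1 := by
  match x, y with
  | none, none => exact absurd hxy (genMyc G t).irrefl
  | none, some (⟨b,hb⟩, j) =>
    have := (genMyc_adj_none_some G t b hb j).1 hxy
    simp only [lvl]; omega
  | some (⟨a,ha⟩, i), none => simp only [lvl]; omega
  | some (⟨a,ha⟩, i), some (⟨b,hb⟩, j) =>
    have := (genMyc_adj_some_some G t a b ha hb i j).1 hxy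
    simp only [lvl]
    rcases this.1 with ⟨h1,h2⟩ | h | h <;> omega

lemma genMyc_walk_length_ge' {x y : Option (Fin (t+1) × V)} (W : (genMyc G t).Walk x y) :
    lvl t y ≤ lvl t x + W.length := by
  induction W with
  | nil => omega
  | @cons x z y hxz W ih =>
    have hstep := genMyc_adj_lvl G t (hxz.symm)
    rw [Walk.length_cons]
    omega

lemma genMyc_walk_length_ge (x : Option (Fin (t+1) × V)) (W : (genMyc G t).Walk x none) :
    t + 1 ≤ lvl t x + W.length := by
  have := genMyc_walk_length_ge' G t W
  simpa [lvl] using this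

lemma genMyc_exists_walk : ∀ (k a : ℕ) (ha : a < t+1) (hk : t - a = k) (i : V)
    (hi : ∃ u, G.Adj i u),
    ∃ W : (genMyc G t).Walk (some (⟨a, ha⟩, i)) none, W.length = t+1-a := by
  intro k
  induction k with
  | zero =>
    intro a ha hk i hi
    have ha' : a = t := by omega
    exact ⟨Walk.cons ((genMyc_adj_some_none G t a ha i).2 ha') Walk.nil, by simp; omega⟩
  | succ k ih =>
    intro a ha hk i hi
    obtain ⟨j, hj⟩ := hi
    obtain ⟨W, hW⟩ := ih (a+1) (by omega) (by omega) j ⟨i, hj.symm⟩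
    refine ⟨Walk.cons ((genMyc_adj_some_some G t a (a+1) ha (by omega) i j).2
      ⟨Or.inr (Or.inl rfl), hj⟩) W, ?_⟩
    simp [hW]; omega

lemma genMyc_dist_none (a : ℕ) (ha : a < t+1) (i : V) (hi : ∃ u, G.Adj i u) :
    (genMyc G t).dist (some (⟨a, ha⟩, i)) none = t+1-a := by
  obtain ⟨W, hW⟩ := genMyc_exists_walk G t (t-a) a ha rfl i hi
  refine le_antisymm (hW ▸ dist_le W) ?_
  have hr : (genMyc G t).Reachable (some (⟨a, ha⟩, i)) none := ⟨W⟩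
  obtain ⟨p, hp⟩ := hr.exists_walk_length_eq_dist
  have := genMyc_walk_length_ge G t _ p
  simp only [lvl] at this
  omega

/-- pendant predicate -/
def Pend {W : Type*} (H : SimpleGraph W) (x : W) : Prop :=
  ∃ y, H.Adj x y ∧ ∀ z, H.Adj x z → z = y

lemma pend_iso {W : Type*} {H : SimpleGraph W} (φ : H ≃g H) {x : W} (hx : Pend H x) :
    Pend H (φ x) := by
  obtain ⟨y, hy, hu⟩ := hx
  refine ⟨φ y, φ.map_adj_iff.2 hy, fun z hz => ?_⟩
  have : H.Adj (φ x) (φ (φ.symm z)) := by rwa [RelIso.apply_symm_apply]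
  have := hu _ (φ.map_adj_iff.1 this)
  rw [← this, RelIso.apply_symm_apply]

lemma pend_B (ht : 1 ≤ t) (i : V) (hi : ∀ u, ¬ G.Adj i u) (hti : t < t+1) :
    Pend (genMyc G t) (some (⟨t, hti⟩, i)) := by
  refine ⟨none, (genMyc_adj_some_none G t t hti i).2 rfl, fun z hz => ?_⟩
  match z with
  | none => rfl
  | some (⟨b, hb⟩, j) =>
    exact absurd ((genMyc_adj_some_some G t t b hti hb i j).1 hz).2 (hi j)

lemma pend_elim [Fintype V] (ht : 1 ≤ t) (x : Option (Fin (t+1) × V)) (hx : Pend (genMyc G t) x) :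
    (∃ (i : V) (hti : t < t+1), (∀ u, ¬ G.Adj i u) ∧ x = some (⟨t, hti⟩, i)) ∨
    (x = none ∧ Fintype.card V = 1) := by
  obtain ⟨y, hy, hu⟩ := hx
  match x with
  | none =>
    refine Or.inr ⟨rfl, ?_⟩
    obtain ⟨i₀ : V, hi₀⟩ : ∃ i₀ : V, y = some (⟨t, by omega⟩, i₀) := by
      match y, hy with
      | none, hy => exact absurd hy (genMyc G t).irrefl
      | some (⟨b, hb⟩, j), hy =>
        have := (genMyc_adj_none_some G t b hb j).1 hy
        exact ⟨j, by subst this; rfl⟩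
    rw [Fintype.card_eq_one_iff]
    refine ⟨i₀, fun j => ?_⟩
    have := hu (some (⟨t, by omega⟩, j)) ((genMyc_adj_none_some G t t (by omega) j).2 rfl)
    rw [hi₀] at this
    rw [Option.some.injEq, Prod.mk.injEq] at this
    exact this.2
  | some (⟨a, ha⟩, i) =>
    by_cases hiso : ∀ u, ¬ G.Adj i u
    · refine Or.inl ⟨i, by omega, hiso, ?_⟩
      have hat : a = t := by
        by_contra hne
        exact ((genMyc_isolated_some G t a ha i).2 ⟨by omega, hiso⟩) y hy
      subst hat; rfl
    · exfalso
      push_neg at hiso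
      obtain ⟨j, hj⟩ := hiso
      rcases Nat.eq_zero_or_pos a with h0 | hpos
      · subst h0
        have h1 := hu (some (⟨0, ha⟩, j))
          ((genMyc_adj_some_some G t 0 0 ha ha i j).2 ⟨Or.inl ⟨rfl, rfl⟩, hj⟩)
        have h2 := hu (some (⟨1, by omega⟩, j))
          ((genMyc_adj_some_some G t 0 1 ha (by omega) i j).2 ⟨Or.inr (Or.inl rfl), hj⟩)
        have h3 := h1.trans h2.symm
        rw [Option.some.injEq, Prod.mk.injEq, Fin.mk.injEq] at h3
        omega
      · rcases Nat.lt_or_ge a t with hat | hat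
        · have h1 := hu (some (⟨a-1, by omega⟩, j))
            ((genMyc_adj_some_some G t a (a-1) ha (by omega) i j).2 ⟨Or.inr (Or.inr (by omega)), hj⟩)
          have h2 := hu (some (⟨a+1, by omega⟩, j))
            ((genMyc_adj_some_some G t a (a+1) ha (by omega) i j).2 ⟨Or.inr (Or.inl rfl), hj⟩)
          have h3 := h1.trans h2.symm
          rw [Option.some.injEq, Prod.mk.injEq, Fin.mk.injEq] at h3
          omega
        · have hat' : a = t := by omega
          have h1 := hu (some (⟨a-1, by omega⟩, j))
            ((genMyc_adj_some_some G t a (a-1) ha (by omega) i j).2 ⟨Or.inr (Or.inr (by omega)), hj⟩)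
          have h2 := hu none ((genMyc_adj_some_none G t a ha i).2 hat')
          exact Option.some_ne_none _ (h1.trans h2.symm)

lemma ext_auto {V : Type*} [Fintype V] (G : SimpleGraph V) {dG : ℕ}
    (c : V → Fin dG) (hc : IsDistinguishing G dG c) (g : V → V)
    (hgS : ∀ i, (∀ u, ¬ G.Adj i u) → g i = i)
    (hginj : Function.Injective g)
    (hadjKK : ∀ i j, (∃ u, G.Adj i u) → (∃ u, G.Adj j u) → (G.Adj (g i) (g j) ↔ G.Adj i j))
    (hcol : ∀ i, c (g i) = c i) :
    ∀ i, g i = i := by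
  have hbij : Function.Bijective g := Finite.injective_iff_bijective.1 hginj
  have hadj2 : ∀ i j, G.Adj (g i) (g j) ↔ G.Adj i j := by
    intro i j
    by_cases hj : ∀ u, ¬ G.Adj j u
    · rw [hgS j hj]
      constructor
      · intro hcon
        exact absurd hcon.symm (hj _)
      · intro hcon
        exact absurd hcon.symm (hj _)
    · push_neg at hj
      by_cases hi : ∀ u, ¬ G.Adj i u
      · rw [hgS i hi]
        constructor
        · intro hcon
          exact absurd hcon (hi _)
        · intro hcon
          exact absurd hcon (hi _)
      · push_neg at hi
        exact hadjKK i j hi hj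
  let ψ : G ≃g G := ⟨Equiv.ofBijective g hbij, fun {a b} => hadj2 a b⟩
  exact hc ψ hcol

lemma genMyc_distinguishing [Fintype V] (ht : 1 ≤ t)
    {d dG : ℕ} (c : V → Fin dG) (hc : IsDistinguishing G dG c)
    (i₀ : V) (hi₀ : ∀ u, ¬ G.Adj i₀ u)
    (c' : Option (Fin (t + 1) × V) → Fin d)
    (hA : ∀ x y, (∀ z, ¬(genMyc G t).Adj x z) → (∀ z, ¬(genMyc G t).Adj y z) →
      c' x = c' y → x = y)
    (hB : ∀ i j, (∀ u, ¬G.Adj i u) → (∀ u, ¬G.Adj j u) →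
      c' (some (⟨t, Nat.lt_succ_self t⟩, i)) = c' (some (⟨t, Nat.lt_succ_self t⟩, j)) → i = j)
    (hw : Fintype.card V = 1 → ∀ i, (∀ u, ¬G.Adj i u) →
      c' none ≠ c' (some (⟨t, Nat.lt_succ_self t⟩, i)))
    (hK : ∀ (s : Fin (t+1)) (i j : V), (∃ u, G.Adj i u) → (∃ u, G.Adj j u) →
      c' (some (s, i)) = c' (some (s, j)) → c i = c j) :
    IsDistinguishing (genMyc G t) d c' := by
  intro φ hφ
  -- Step 1: isolated vertices fixed
  have fixA : ∀ x, (∀ z, ¬(genMyc G t).Adj x z) → φ x = x := by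
    intro x hx
    exact hA _ _ (iso_isolated φ x hx) hx (hφ x)
  -- Step 2: φ none = none
  have fixw : φ none = none := by
    have hpb := pend_B G t ht i₀ hi₀ (Nat.lt_succ_self t)
    rcases pend_elim G t ht _ (pend_iso φ hpb) with ⟨i₁, hti, hiso1, heq⟩ | ⟨heq, hcard⟩
    · have hadj : (genMyc G t).Adj (some (⟨t, Nat.lt_succ_self t⟩, i₀)) none :=
        (genMyc_adj_some_none G t t _ i₀).2 rfl
      have hadj2 : (genMyc G t).Adj (φ (some (⟨t, Nat.lt_succ_self t⟩, i₀))) (φ none) :=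
        φ.map_adj_iff.2 hadj
      rw [heq] at hadj2
      rcases hn : φ none with _ | ⟨⟨b, hb⟩, j⟩
      · rfl
      · rw [hn] at hadj2
        exact absurd ((genMyc_adj_some_some G t t b hti hb i₁ j).1 hadj2).2 (hiso1 j)
    · exact absurd (heq ▸ hφ (some (⟨t, Nat.lt_succ_self t⟩, i₀))) (hw hcard i₀ hi₀)
  -- Step 3: pendant (B) vertices fixed
  have fixB : ∀ i, (∀ u, ¬ G.Adj i u) →
      φ (some (⟨t, Nat.lt_succ_self t⟩, i)) = some (⟨t, Nat.lt_succ_self t⟩, i) := by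
    intro i hi
    have hpb := pend_B G t ht i hi (Nat.lt_succ_self t)
    rcases pend_elim G t ht _ (pend_iso φ hpb) with ⟨j, htj, hisoj, heq⟩ | ⟨heq, hcard⟩
    · have hcc := hφ (some (⟨t, Nat.lt_succ_self t⟩, i))
      rw [heq] at hcc
      obtain rfl := hB j i hisoj hi hcc
      exact heq
    · exact absurd (φ.injective (heq.trans fixw.symm)) (by simp)
  -- Step 4: levels and non-isolation preserved
  have fixM : ∀ (a : ℕ) (ha : a < t+1) (i : V), (∃ u, G.Adj i u) →
      ∃ j, (∃ u, G.Adj j u) ∧ φ (some (⟨a,ha⟩,i)) = some (⟨a,ha⟩, j) := by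
    intro a ha i hi
    rcases hx : φ (some (⟨a,ha⟩,i)) with _ | ⟨⟨b,hb⟩,j⟩
    · exact absurd (φ.injective (hx.trans fixw.symm)) (by simp)
    · by_cases hj : ∀ u, ¬ G.Adj j u
      · exfalso
        rcases Nat.lt_or_ge b t with hbt | hbt
        · have hisoφ : ∀ z, ¬ (genMyc G t).Adj (some (⟨b,hb⟩,j)) z :=
            (genMyc_isolated_some G t b hb j).2 ⟨hbt, hj⟩
          have hfix := fixA _ hisoφ
          have hxy : (some (⟨a,ha⟩,i) : Option (Fin (t+1) × V)) = some (⟨b,hb⟩,j) :=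
            φ.injective (hx.trans hfix.symm)
          rw [Option.some.injEq, Prod.mk.injEq] at hxy
          obtain ⟨u, hu⟩ := hi
          rw [hxy.2] at hu
          exact hj u hu
        · have hbt' : b = t := by omega
          subst hbt'
          have hfix := fixB j hj
          have hxy := φ.injective (hx.trans hfix.symm)
          rw [Option.some.injEq, Prod.mk.injEq] at hxy
          obtain ⟨u, hu⟩ := hi
          rw [hxy.2] at hu
          exact hj u hu
      · push_neg at hj
        have hd1 := genMyc_dist_none G t a ha i hi
        have hd2 := iso_dist_eq φ (some (⟨a,ha⟩,i)) none
        rw [fixw, hx, genMyc_dist_none G t b hb j hj, hd1] at hd2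
        have hba : b = a := by omega
        subst hba
        exact ⟨j, hj, rfl⟩
  -- Step 5: levels of non-isolated vertices fixed, by induction on the level
  have fixK : ∀ (a : ℕ) (ha : a < t+1) (i : V), (∃ u, G.Adj i u) →
      φ (some (⟨a,ha⟩,i)) = some (⟨a,ha⟩,i) := by
    intro a
    induction a with
    | zero =>
      intro ha i hi
      classical
      set g : V → V := fun i => if h : ∃ u, G.Adj i u then (fixM 0 ha i h).choose else i with hg
      have hgK : ∀ i (h : ∃ u, G.Adj i u),
          (∃ u, G.Adj (g i) u) ∧ φ (some (⟨0,ha⟩,i)) = some (⟨0,ha⟩, g i) := by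
        intro i h
        have := (fixM 0 ha i h).choose_spec
        simp only [hg, dif_pos h]
        exact this
      have hgS : ∀ i, (∀ u, ¬ G.Adj i u) → g i = i := by
        intro i h
        simp only [hg]
        rw [dif_neg]
        push_neg
        exact h
      have hginj : Function.Injective g := by
        intro i₁ i₂ he
        by_cases h1 : ∃ u, G.Adj i₁ u <;> by_cases h2 : ∃ u, G.Adj i₂ u
        · have e1 := (hgK i₁ h1).2
          have e2 := (hgK i₂ h2).2
          rw [he] at e1
          have := φ.injective (e1.trans e2.symm)
          rw [Option.some.injEq, Prod.mk.injEq] at this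
          exact this.2
        · exfalso
          rw [hgS i₂ (by push_neg at h2; exact h2)] at he
          obtain ⟨u, hu⟩ := (hgK i₁ h1).1
          rw [he] at hu
          push_neg at h2
          exact h2 u hu
        · exfalso
          rw [hgS i₁ (by push_neg at h1; exact h1)] at he
          obtain ⟨u, hu⟩ := (hgK i₂ h2).1
          rw [← he] at hu
          push_neg at h1
          exact h1 u hu
        · rw [hgS i₁ (by push_neg at h1; exact h1), hgS i₂ (by push_neg at h2; exact h2)] at he
          exact he
      have hadjKK : ∀ i j, (∃ u, G.Adj i u) → (∃ u, G.Adj j u) →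
          (G.Adj (g i) (g j) ↔ G.Adj i j) := by
        intro i j hi' hj'
        have adj0 : ∀ (x y : V), (genMyc G t).Adj (some (⟨0,ha⟩,x)) (some (⟨0,ha⟩,y)) ↔ G.Adj x y := by
          intro x y
          rw [genMyc_adj_some_some G t 0 0 ha ha x y]
          constructor
          · exact fun h => h.2
          · exact fun h => ⟨Or.inl ⟨rfl, rfl⟩, h⟩
        rw [← adj0 i j, ← adj0 (g i) (g j), ← (hgK i hi').2, ← (hgK j hj').2]
        exact φ.map_adj_iff
      have hcol : ∀ i, c (g i) = c i := by
        intro i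
        by_cases h : ∃ u, G.Adj i u
        · refine hK ⟨0, ha⟩ (g i) i (hgK i h).1 h ?_
          have := hφ (some (⟨0,ha⟩,i))
          rw [(hgK i h).2] at this
          exact this
        · rw [hgS i (by push_neg at h; exact h)]
      have := ext_auto G c hc g hgS hginj hadjKK hcol
      rw [(hgK i hi).2, this i]
    | succ a ih =>
      intro ha i hi
      classical
      have ha' : a < t + 1 := by omega
      set g : V → V := fun i => if h : ∃ u, G.Adj i u then (fixM (a+1) ha i h).choose else i with hg
      have hgK : ∀ i (h : ∃ u, G.Adj i u),
          (∃ u, G.Adj (g i) u) ∧ φ (some (⟨a+1,ha⟩,i)) = some (⟨a+1,ha⟩, g i) := by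
        intro i h
        have := (fixM (a+1) ha i h).choose_spec
        simp only [hg, dif_pos h]
        exact this
      have hgS : ∀ i, (∀ u, ¬ G.Adj i u) → g i = i := by
        intro i h
        simp only [hg]
        rw [dif_neg]
        push_neg
        exact h
      have hginj : Function.Injective g := by
        intro i₁ i₂ he
        by_cases h1 : ∃ u, G.Adj i₁ u <;> by_cases h2 : ∃ u, G.Adj i₂ u
        · have e1 := (hgK i₁ h1).2
          have e2 := (hgK i₂ h2).2
          rw [he] at e1
          have := φ.injective (e1.trans e2.symm)
          rw [Option.some.injEq, Prod.mk.injEq] at this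
          exact this.2
        · exfalso
          rw [hgS i₂ (by push_neg at h2; exact h2)] at he
          obtain ⟨u, hu⟩ := (hgK i₁ h1).1
          rw [he] at hu
          push_neg at h2
          exact h2 u hu
        · exfalso
          rw [hgS i₁ (by push_neg at h1; exact h1)] at he
          obtain ⟨u, hu⟩ := (hgK i₂ h2).1
          rw [← he] at hu
          push_neg at h1
          exact h1 u hu
        · rw [hgS i₁ (by push_neg at h1; exact h1), hgS i₂ (by push_neg at h2; exact h2)] at he
          exact he
      -- mixed adjacency: for i j non-isolated, Adj i (g j) ↔ Adj i j
      have hmix : ∀ i j, (∃ u, G.Adj i u) → (∃ u, G.Adj j u) → (G.Adj i (g j) ↔ G.Adj i j) := by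
        intro i j hi' hj'
        have adjstep : ∀ (x y : V), (genMyc G t).Adj (some (⟨a,ha'⟩,x)) (some (⟨a+1,ha⟩,y)) ↔ G.Adj x y := by
          intro x y
          rw [genMyc_adj_some_some G t a (a+1) ha' ha x y]
          constructor
          · exact fun h => h.2
          · exact fun h => ⟨Or.inr (Or.inl rfl), h⟩
        rw [← adjstep i (g j), ← adjstep i j]
        conv_rhs => rw [← φ.map_adj_iff]
        rw [ih ha' i hi', (hgK j hj').2]
      have hadjKK : ∀ i j, (∃ u, G.Adj i u) → (∃ u, G.Adj j u) →
          (G.Adj (g i) (g j) ↔ G.Adj i j) := by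
        intro i j hi' hj'
        rw [hmix (g i) j (hgK i hi').1 hj', adj_comm, hmix j i hj' hi', adj_comm]
      have hcol : ∀ i, c (g i) = c i := by
        intro i
        by_cases h : ∃ u, G.Adj i u
        · refine hK ⟨a+1, ha⟩ (g i) i (hgK i h).1 h ?_
          have := hφ (some (⟨a+1,ha⟩,i))
          rw [(hgK i h).2] at this
          exact this
        · rw [hgS i (by push_neg at h; exact h)]
      have := ext_auto G c hc g hgS hginj hadjKK hcol
      rw [(hgK i hi).2, this i]
  -- conclude
  intro v
  match v with
  | none => exact fixw
  | some (⟨a, ha⟩, i) =>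
    by_cases hiso : ∀ u, ¬ G.Adj i u
    · rcases Nat.lt_or_ge a t with hat | hat
      · exact fixA _ ((genMyc_isolated_some G t a ha i).2 ⟨hat, hiso⟩)
      · have hat' : t = a := by omega
        subst hat'
        exact fixB i hiso
    · push_neg at hiso
      exact fixK a ha i hiso

end AuxMyc


/-- Every finite graph has a distinguishing coloring (with `|V|` colors). -/
lemma distSet_nonempty {W : Type*} [Fintype W] (H : SimpleGraph W) :
    {d | ∃ c : W → Fin d, IsDistinguishing H d c}.Nonempty := by
  classical
  refine ⟨Fintype.card W, Fintype.equivFin W, fun φ hφ v => ?_⟩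
  exact (Fintype.equivFin W).injective (hφ v)

theorem stmt_14 {V : Type*} [Fintype V] (G : SimpleGraph V)
    (t : ℕ) (ht : 1 ≤ t)
    (ℓ : ℕ) (hℓ : ℓ = {v : V | ∀ u : V, ¬ G.Adj v u}.ncard)
    (h : distNum G < t * ℓ) :
    distNum (genMyc G t) = t * ℓ := by
  classical
  set S : Set V := {v : V | ∀ u : V, ¬ G.Adj v u} with hSdef
  have hcardS : Fintype.card S = ℓ := by
    rw [hℓ, Set.ncard_eq_toFinset_card', Set.toFinset_card]
  have htl1 : 1 ≤ t * ℓ := by omega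
  have hl1 : 1 ≤ ℓ := by
    rcases Nat.eq_zero_or_pos ℓ with h0 | h1
    · subst h0
      rw [Nat.mul_zero] at h
      omega
    · exact h1
  -- a designated isolated vertex
  have hSnon : Nonempty S := by
    rw [← Fintype.card_pos_iff, hcardS]; omega
  obtain ⟨i₀, hi₀⟩ := hSnon
  -- t * ℓ ≥ 2
  have htl2 : 2 ≤ t * ℓ := by
    by_contra hcon
    have htl : t * ℓ = 1 := by omega
    have hd0 : distNum G = 0 := by omega
    have hmem : 0 ∈ {d | ∃ c : V → Fin d, IsDistinguishing G d c} := by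
      rcases (Nat.sInf_eq_zero.1 hd0) with h0 | hempty
      · exact h0
      · exact absurd hempty (Set.nonempty_iff_ne_empty.1 (distSet_nonempty G))
    obtain ⟨c, -⟩ := hmem
    exact (c i₀).elim0
  -- the distinguishing coloring of G with distNum G colors
  obtain ⟨c, hc⟩ : ∃ c : V → Fin (distNum G), IsDistinguishing G (distNum G) c :=
    Nat.sInf_mem (distSet_nonempty G)
  -- equivalences for the coloring
  have hcardprod : Fintype.card (Fin t × S) = t * ℓ := by
    rw [Fintype.card_prod, Fintype.card_fin, hcardS]
  have eA : (Fin t × S) ≃ Fin (t * ℓ) := Fintype.equivFinOfCardEq hcardprod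
  have eB : S ≃ Fin ℓ := Fintype.equivFinOfCardEq hcardS
  have hle : ℓ ≤ t * ℓ := Nat.le_mul_of_pos_left ℓ (by omega)
  have hdle : distNum G ≤ t * ℓ := le_of_lt h
  apply le_antisymm
  · -- upper bound: exhibit a distinguishing coloring with t * ℓ colors
    set c' : Option (Fin (t + 1) × V) → Fin (t * ℓ) := fun x =>
      match x with
      | none => ⟨t * ℓ - 1, by omega⟩
      | some (s, i) =>
        if hsi : (s : ℕ) < t ∧ i ∈ S then eA (⟨(s : ℕ), hsi.1⟩, ⟨i, hsi.2⟩)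
        else if h2 : i ∈ S then Fin.castLE hle (eB ⟨i, h2⟩)
        else Fin.castLE hdle (c i) with hc'def
    apply Nat.sInf_le
    refine ⟨c', genMyc_distinguishing G t ht c hc i₀ hi₀ c' ?_ ?_ ?_ ?_⟩
    · -- hA : injective on isolated vertices
      intro x y hx hy hcc
      match x, y with
      | none, _ =>
        exact absurd ((genMyc_adj_none_some G t t (by omega) i₀).2 rfl)
          (hx (some (⟨t, by omega⟩, i₀)))
      | _, none =>
        exact absurd ((genMyc_adj_none_some G t t (by omega) i₀).2 rfl)
          (hy (some (⟨t, by omega⟩, i₀)))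
      | some (⟨a, ha⟩, i), some (⟨b, hb⟩, j) =>
        have hxi := (genMyc_isolated_some G t a ha i).1 hx
        have hyj := (genMyc_isolated_some G t b hb j).1 hy
        have hxi' : a < t ∧ i ∈ S := ⟨hxi.1, hxi.2⟩
        have hyj' : b < t ∧ j ∈ S := ⟨hyj.1, hyj.2⟩
        have e1 : c' (some (⟨a, ha⟩, i)) = eA (⟨a, hxi'.1⟩, ⟨i, hxi'.2⟩) := by
          simp only [hc'def, dif_pos hxi']
        have e2 : c' (some (⟨b, hb⟩, j)) = eA (⟨b, hyj'.1⟩, ⟨j, hyj'.2⟩) := by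
          simp only [hc'def, dif_pos hyj']
        rw [e1, e2] at hcc
        have := eA.injective hcc
        rw [Prod.mk.injEq, Fin.mk.injEq, Subtype.mk.injEq] at this
        simp only [Option.some.injEq, Prod.mk.injEq, Fin.mk.injEq]
        exact ⟨this.1, this.2⟩
    · -- hB : injective on pendants
      intro i j hi hj hcc
      have hi' : i ∈ S := hi
      have hj' : j ∈ S := hj
      have hni : ¬((t : ℕ) < t ∧ i ∈ S) := fun hcon => absurd hcon.1 (lt_irrefl t)
      have e1 : c' (some (⟨t, Nat.lt_succ_self t⟩, i)) = Fin.castLE hle (eB ⟨i, hi'⟩) := by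
        simp only [hc'def, dif_neg hni, dif_pos hi']
      have hnj : ¬((t : ℕ) < t ∧ j ∈ S) := fun hcon => absurd hcon.1 (lt_irrefl t)
      have e2 : c' (some (⟨t, Nat.lt_succ_self t⟩, j)) = Fin.castLE hle (eB ⟨j, hj'⟩) := by
        simp only [hc'def, dif_neg hnj, dif_pos hj']
      rw [e1, e2] at hcc
      have hval := congrArg Fin.val hcc
      simp only [Fin.coe_castLE] at hval
      have := eB.injective (Fin.ext hval)
      exact congrArg Subtype.val this
    · -- hw : the root gets a color distinct from pendants when |V| = 1
      intro hcard i hi hcc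
      have hl1' : ℓ ≤ 1 := by
        rw [← hcardS, ← hcard]
        exact Fintype.card_le_of_injective _ Subtype.val_injective
      have hleq : ℓ = 1 := le_antisymm hl1' hl1
      have hi' : i ∈ S := hi
      have hni : ¬((t : ℕ) < t ∧ i ∈ S) := fun hcon => absurd hcon.1 (lt_irrefl t)
      have e2 : c' (some (⟨t, Nat.lt_succ_self t⟩, i)) = Fin.castLE hle (eB ⟨i, hi'⟩) := by
        simp only [hc'def, dif_neg hni, dif_pos hi']
      have e1 : c' none = ⟨t * ℓ - 1, by omega⟩ := rfl
      rw [e1, e2] at hcc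
      have hval := congrArg Fin.val hcc
      have hv2 : ((eB ⟨i, hi'⟩) : ℕ) < ℓ := (eB ⟨i, hi'⟩).isLt
      simp only [Fin.coe_castLE] at hval
      omega
    · -- hK : colors on non-isolated vertices reflect c
      intro s i j hi hj hcc
      have hi' : i ∉ S := by
        intro hcon
        obtain ⟨u, hu⟩ := hi
        exact hcon u hu
      have hj' : j ∉ S := by
        intro hcon
        obtain ⟨u, hu⟩ := hj
        exact hcon u hu
      have hni : ¬((s : ℕ) < t ∧ i ∈ S) := fun hcon => hi' hcon.2
      have hnj : ¬((s : ℕ) < t ∧ j ∈ S) := fun hcon => hj' hcon.2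
      have e1 : c' (some (s, i)) = Fin.castLE hdle (c i) := by
        simp only [hc'def, dif_neg hni, dif_neg hi']
      have e2 : c' (some (s, j)) = Fin.castLE hdle (c j) := by
        simp only [hc'def, dif_neg hnj, dif_neg hj']
      rw [e1, e2] at hcc
      have hval := congrArg Fin.val hcc
      simp only [Fin.coe_castLE] at hval
      exact Fin.ext hval
  · -- lower bound
    apply le_csInf (distSet_nonempty (genMyc G t))
    intro d hd
    obtain ⟨c', hc'⟩ := hd
    by_contra hcon
    push_neg at hcon
    -- pigeonhole among the t * ℓ isolated vertices
    set F : Fin t × S → Option (Fin (t + 1) × V) := fun p =>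
      some (⟨(p.1 : ℕ), by omega⟩, (p.2 : V)) with hFdef
    have hFinj : Function.Injective F := by
      intro p q hpq
      simp only [hFdef, Option.some.injEq, Prod.mk.injEq, Fin.mk.injEq] at hpq
      exact Prod.ext (Fin.ext hpq.1) (Subtype.ext hpq.2)
    have hiso : ∀ p : Fin t × S, ∀ z, ¬ (genMyc G t).Adj (F p) z := by
      intro p
      exact (genMyc_isolated_some G t (p.1 : ℕ) (by omega) (p.2 : V)).2 ⟨p.1.isLt, p.2.2⟩
    obtain ⟨p, q, hpq, hcpq⟩ := Fintype.exists_ne_map_eq_of_card_lt (fun p : Fin t × S => c' (F p))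
      (by rw [hcardprod, Fintype.card_fin]; omega)
    have hFpq : F p ≠ F q := fun hcon => hpq (hFinj hcon)
    obtain ⟨φ, hφeq⟩ := swap_iso_of_isolated (genMyc G t) (F p) (F q) (hiso p) (hiso q)
    have hpres : ∀ v, c' (φ v) = c' v := by
      intro v
      rw [hφeq v]
      rcases eq_or_ne v (F p) with rfl | hvp
      · rw [Equiv.swap_apply_left]
        exact hcpq.symm
      · rcases eq_or_ne v (F q) with rfl | hvq
        · rw [Equiv.swap_apply_right]
          exact hcpq
        · rw [Equiv.swap_apply_of_ne_of_ne hvp hvq]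
    have := hc' φ hpres (F p)
    rw [hφeq (F p), Equiv.swap_apply_left] at this
    exact hFpq this.symm
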